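/- Let M be an n×n integer matrix congruent to J−I modulo 2 (entrywise). Then the characteristic polynomial of M is congruent modulo 2Z[x] to (x+1)^n if n is even, and to x(x+1)^{n−1} if n is odd. -/

import Mathlib

open Polynomial

/-- The all-ones matrix. -/
def Jmat (n : ℕ) : Matrix (Fin n) (Fin n) ℤ := Matrix.of fun _ _ => 1

open Matrix

noncomputable def Amat (n : ℕ) : Matrix (Fin n) (Fin n) (ZMod 2) :=
  Matrix.of fun i j => if i = j then 0 else 1

set_option maxHeartbeats 1600000 in
set_option synthInstance.maxHeartbeats 400000 in
lemma key (n : ℕ) :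
    (Amat n).charpoly = if Even n then (X + 1 : (ZMod 2)[X]) ^ n
      else X * (X + 1) ^ (n - 1) := by
  set K := RatFunc (ZMod 2)
  set φ := algebraMap ((ZMod 2)[X]) K with hφ
  have hinj : Function.Injective φ := IsFractionRing.injective _ _
  set t : K := φ X with ht
  have htne : t + 1 ≠ 0 := by
    intro h
    have : (X + 1 : (ZMod 2)[X]) = 0 := by
      apply hinj
      simpa using h
    simpa using congrArg (fun p => Polynomial.coeff p 0) this
  have h2 : (2 : K) = 0 := by
    have h0 : ((2 : ZMod 2)) = 0 := by decide
    rw [← map_ofNat (algebraMap (ZMod 2) K) 2, h0, map_zero]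
  have hchar : φ.mapMatrix (charmatrix (Amat n)) =
      (t + 1) • (1 + Matrix.replicateCol Unit (fun _ : Fin n => (t + 1)⁻¹) *
        Matrix.replicateRow Unit (fun _ : Fin n => (1 : K))) := by
    ext i j
    by_cases h : i = j
    · subst h
      simp only [RingHom.mapMatrix_apply, Matrix.map_apply, charmatrix_apply_eq, Amat,
        Matrix.of_apply, if_pos rfl, map_sub, map_zero, Matrix.smul_apply,
        Matrix.add_apply, Matrix.one_apply_eq, Matrix.mul_apply, Matrix.replicateCol_apply,
        Matrix.replicateRow_apply, Finset.sum_const, smul_eq_mul, map_C, map_zero]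
      simp only [if_true, map_zero, sub_zero, Finset.card_univ, Fintype.card_unit,
        one_smul, mul_one]
      rw [← ht, mul_add, mul_one, mul_inv_cancel₀ htne]
      linear_combination -h2
    · simp only [RingHom.mapMatrix_apply, Matrix.map_apply, charmatrix_apply_ne _ _ _ h, Amat,
        Matrix.of_apply, if_neg h, map_neg, Matrix.smul_apply,
        Matrix.add_apply, Matrix.one_apply_ne h, Matrix.mul_apply, Matrix.replicateCol_apply,
        Matrix.replicateRow_apply, Finset.sum_const, smul_eq_mul, map_C, _root_.map_one]
      simp only [Finset.card_univ, Fintype.card_unit, one_smul, mul_one]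
      rw [zero_add, mul_inv_cancel₀ htne]
      linear_combination -h2
  have hdet : φ (Amat n).charpoly = (t + 1) ^ n * (1 + (n : K) * (t + 1)⁻¹) := by
    rw [Matrix.charpoly, RingHom.map_det, hchar, Matrix.det_smul,
      Matrix.det_one_add_replicateCol_mul_replicateRow]
    congr 1
    · simp
    · simp [dotProduct, Finset.sum_const, mul_comm]
  have hcast : ∀ m : ℕ, ((m : K)) = algebraMap (ZMod 2) K (m : ZMod 2) := fun m =>
    (map_natCast _ m).symm
  split_ifs with he
  · apply hinj
    rw [hdet]
    have hn : (n : K) = 0 := by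
      rw [hcast, (ZMod.natCast_eq_zero_iff n 2).2 he.two_dvd, map_zero]
    rw [hn]
    simp [map_pow, map_add, _root_.map_one, ← ht]
  · have hodd : Odd n := (Nat.even_or_odd n).resolve_left he
    have hn : (n : K) = 1 := by
      have : (n : ZMod 2) = 1 := by
        rw [← ZMod.natCast_mod, Nat.odd_iff.1 hodd, Nat.cast_one]
      rw [hcast, this, _root_.map_one]
    obtain ⟨k, rfl⟩ : ∃ k, n = k + 1 := ⟨n - 1, (Nat.succ_pred_eq_of_pos hodd.pos).symm⟩
    apply hinj
    rw [hdet, hn, one_mul, mul_add, mul_one, pow_succ, mul_assoc,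
      mul_inv_cancel₀ htne, mul_one, Nat.add_sub_cancel,
      _root_.map_mul, map_pow, map_add, _root_.map_one, ← ht]
    linear_combination (t + 1) ^ k * h2

theorem charpoly_mod_two {n : ℕ} (M : Matrix (Fin n) (Fin n) ℤ)
    (hM : ∀ i j, M i j ≡ (Jmat n - 1) i j [ZMOD 2]) :
    (Even n → ∀ m : ℕ, M.charpoly.coeff m ≡ ((X + 1 : ℤ[X]) ^ n).coeff m [ZMOD 2]) ∧
    (Odd n → ∀ m : ℕ, M.charpoly.coeff m ≡ ((X * (X + 1) ^ (n - 1) : ℤ[X])).coeff m [ZMOD 2]) := by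
  have f := Int.castRingHom (ZMod 2)
  have hmap : M.map (Int.castRingHom (ZMod 2)) = Amat n := by
    ext i j
    have h := (ZMod.intCast_eq_intCast_iff _ _ 2).2 (hM i j)
    simp only [Matrix.map_apply, eq_intCast]
    rw [h]
    by_cases hij : i = j <;>
      simp [Jmat, Amat, Matrix.sub_apply, Matrix.one_apply, hij]
  have hcp : M.charpoly.map (Int.castRingHom (ZMod 2)) = (Amat n).charpoly := by
    rw [← Matrix.charpoly_map M (Int.castRingHom (ZMod 2))]
    rw [hmap]
  constructor
  · intro he m
    refine (ZMod.intCast_eq_intCast_iff _ _ 2).1 ?_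
    have := congrArg (fun p => Polynomial.coeff p m) hcp
    simp only [Polynomial.coeff_map, eq_intCast] at this
    rw [this, key n, if_pos he]
    have : ((X + 1 : ℤ[X]) ^ n).map (Int.castRingHom (ZMod 2)) = (X + 1 : (ZMod 2)[X]) ^ n := by
      simp
    rw [← this, Polynomial.coeff_map, eq_intCast]
  · intro ho m
    refine (ZMod.intCast_eq_intCast_iff _ _ 2).1 ?_
    have := congrArg (fun p => Polynomial.coeff p m) hcp
    simp only [Polynomial.coeff_map, eq_intCast] at this
    rw [this, key n, if_neg (Nat.not_even_iff_odd.2 ho)]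
    have : ((X * (X + 1) ^ (n - 1) : ℤ[X])).map (Int.castRingHom (ZMod 2)) =
        (X * (X + 1) ^ (n - 1) : (ZMod 2)[X]) := by
      simp
    rw [← this, Polynomial.coeff_map, eq_intCast]
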